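/- The sequence T_n = D(n)·D(n+2) satisfies T_{2n} = T_{2n-1}·T_{n-1} for n ≥ 1, T_{2n+1} = -T_{2n}, with T_0 = 1 and T_1 = -1. -/

import Mathlib

open Classical in
noncomputable def B (m : ℕ) : ℤ := if ∃ k : ℕ, m + 1 = 2 ^ k then 1 else 0

open Classical in
noncomputable def A (n : ℕ) : ℤ := if ∃ k : ℕ, n + 2 = 2 ^ (k + 1) then 1 else 0

lemma A_even (m : ℕ) : A (2 * m) = B m := by
  have h : (∃ k : ℕ, 2 * m + 2 = 2 ^ (k + 1)) ↔ ∃ k : ℕ, m + 1 = 2 ^ k :=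
    ⟨fun ⟨k, h⟩ => ⟨k, by rw [pow_succ] at h; omega⟩,
     fun ⟨k, h⟩ => ⟨k, by rw [pow_succ]; omega⟩⟩
  simp only [A, B]
  classical exact if_congr h rfl rfl

lemma A_odd (m : ℕ) : A (2 * m + 1) = 0 := by
  unfold A
  rw [if_neg]
  rintro ⟨k, h⟩
  rw [pow_succ] at h; omega

lemma B_even (m : ℕ) : B (2 * m) = if m = 0 then 1 else 0 := by
  have h : (∃ k : ℕ, 2 * m + 1 = 2 ^ k) ↔ m = 0 := by
    constructor
    · rintro ⟨k, h⟩
      cases k with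
      | zero => simpa using h
      | succ k => rw [pow_succ] at h; have : 1 ≤ 2 ^ k := Nat.one_le_two_pow; omega
    · rintro rfl; exact ⟨0, by omega⟩
  simp only [B]
  classical exact if_congr h rfl rfl

lemma B_odd (m : ℕ) : B (2 * m + 1) = B m := by
  have h : (∃ k : ℕ, 2 * m + 1 + 1 = 2 ^ k) ↔ ∃ k : ℕ, m + 1 = 2 ^ k := by
    constructor
    · rintro ⟨k, h⟩
      cases k with
      | zero => omega
      | succ k => exact ⟨k, by rw [pow_succ] at h; omega⟩
    · rintro ⟨k, h⟩; exact ⟨k + 1, by rw [pow_succ]; omega⟩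
  simp only [B]
  classical exact if_congr h rfl rfl

lemma B_zero : B 0 = 1 := by unfold B; rw [if_pos ⟨0, rfl⟩]

open Fin.NatCast in
lemma rot_pow (n m : ℕ) (i : Fin (n + 1)) :
    ((finRotate (n + 1)) ^ m) i = i + (m : Fin (n + 1)) := by
  induction m with
  | zero => simp
  | succ m ih =>
    rw [pow_succ', Equiv.Perm.mul_apply, finRotate_succ_apply, ih]
    push_cast
    abel

open Fin.NatCast in
lemma sign_sumComm (k : ℕ) :
    Equiv.Perm.sign (Equiv.sumComm (Fin k) (Fin k) : Equiv.Perm (Fin k ⊕ Fin k)) = (-1) ^ k := by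
  cases k with
  | zero =>
    have h : (Equiv.sumComm (Fin 0) (Fin 0)) = Equiv.refl _ := by
      ext x; rcases x with a | a <;> exact a.elim0
    rw [h]; simp
  | succ j =>
    have h : (j+1) + (j+1) = j+1+j+1 := by omega
    set e : (Fin (j+1) ⊕ Fin (j+1)) ≃ Fin (j+1+j+1) := finSumFinEquiv.trans (finCongr h) with he0
    rw [← Equiv.Perm.sign_permCongr e]
    have he : e.permCongr (Equiv.sumComm (Fin (j+1)) (Fin (j+1)))
        = (finRotate (j+1+j+1)) ^ (j+1) := by
      ext i
      obtain ⟨x, rfl⟩ : ∃ x, e x = i := ⟨e.symm i, by simp⟩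
      rw [Equiv.permCongr_apply, Equiv.symm_apply_apply, rot_pow]

      rw [Fin.val_add, Fin.val_natCast]
      have h1 : (j + 1) % (j+1+j+1) = j + 1 := Nat.mod_eq_of_lt (by omega)
      rcases x with a | b <;>
        simp only [he0, Equiv.trans_apply, finCongr_apply, Fin.coe_cast, Equiv.sumComm_apply,
          Sum.swap_inl, Sum.swap_inr, finSumFinEquiv_apply_left, finSumFinEquiv_apply_right,
          Fin.coe_castAdd, Fin.coe_natAdd]
      · rw [h1, Nat.mod_eq_of_lt (by have := a.isLt; omega)]
        omega
      · rw [h1]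
        have hb := b.isLt
        have h2 : (j + 1) + (b : ℕ) + (j + 1) = (b : ℕ) + (j+1+j+1) := by omega
        rw [h2, Nat.add_mod_right, Nat.mod_eq_of_lt (by omega)]
    rw [he, map_pow, sign_finRotate]
    have hodd : ((-1 : ℤˣ) ^ (j+1+j)) = -1 := Odd.neg_one_pow ⟨j, by omega⟩
    rw [show j + 1 + j + 1 - 1 = j + 1 + j by omega, hodd]

open Matrix in
lemma det_swap_right (k : ℕ) (E F G : Matrix (Fin k) (Fin k) ℤ) :
    (fromBlocks E F G 0).det = (-1) ^ k * (G.det * F.det) := by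
  have h : fromBlocks E F G (0 : Matrix (Fin k) (Fin k) ℤ)
      = (fromBlocks G 0 E F).submatrix (Equiv.sumComm (Fin k) (Fin k)) id := by
    ext x y; rcases x with a | a <;> rcases y with b | b <;> rfl
  rw [h, det_permute, det_fromBlocks_zero₁₂, sign_sumComm]
  simp

open Matrix in
lemma det_swap_left (k : ℕ) (F G X : Matrix (Fin k) (Fin k) ℤ) :
    (fromBlocks 0 F G X).det = (-1) ^ k * (G.det * F.det) := by
  have h : fromBlocks (0 : Matrix (Fin k) (Fin k) ℤ) F G X
      = (fromBlocks G X 0 F).submatrix (Equiv.sumComm (Fin k) (Fin k)) id := by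
    ext x y; rcases x with a | a <;> rcases y with b | b <;> rfl
  rw [h, det_permute, det_fromBlocks_zero₂₁, sign_sumComm]
  simp

noncomputable def D (n : ℕ) : ℤ :=
  Matrix.det (Matrix.of fun i j : Fin n => A ((i : ℕ) + j))

noncomputable def T (n : ℕ) : ℤ := D n * D (n + 2)

noncomputable def P (n : ℕ) : ℤ :=
  Matrix.det (Matrix.of fun i j : Fin n => B ((i : ℕ) + j))

noncomputable def Q (n : ℕ) : ℤ :=
  Matrix.det (Matrix.of fun i j : Fin n => B ((i : ℕ) + j + 1))

def shuf (n : ℕ) : Fin ((n+1)/2) ⊕ Fin (n/2) ≃ Fin n where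
  toFun x := Sum.elim (fun a => (⟨2*a.1, by have := a.2; omega⟩ : Fin n))
    (fun b => (⟨2*b.1+1, by have := b.2; omega⟩ : Fin n)) x
  invFun i := if h : i.1 % 2 = 0 then .inl ⟨i.1/2, by have := i.2; omega⟩
    else .inr ⟨i.1/2, by have := i.2; omega⟩
  left_inv x := by
    rcases x with a | b
    · simp only [Sum.elim_inl]
      exact (dif_pos (show 2 * a.1 % 2 = 0 by omega)).trans
        (congrArg Sum.inl (Fin.ext (by simp only [Fin.val_mk]; omega)))
    · simp only [Sum.elim_inr]
      exact (dif_neg (show ¬ (2 * b.1 + 1) % 2 = 0 by omega)).trans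
        (congrArg Sum.inr (Fin.ext (by simp only [Fin.val_mk]; omega)))
  right_inv i := by
    dsimp only
    by_cases h : i.1 % 2 = 0
    · rw [dif_pos h]
      simp only [Sum.elim_inl]
      exact Fin.ext (by simp only [Fin.val_mk]; omega)
    · rw [dif_neg h]
      simp only [Sum.elim_inr]
      exact Fin.ext (by simp only [Fin.val_mk]; omega)

lemma shuf_inl (n : ℕ) (a : Fin ((n+1)/2)) : ((shuf n) (Sum.inl a) : ℕ) = 2 * a := rfl
lemma shuf_inr (n : ℕ) (b : Fin (n/2)) : ((shuf n) (Sum.inr b) : ℕ) = 2 * b + 1 := rfl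

open Matrix in
lemma recD (n : ℕ) : D n = P ((n+1)/2) * Q (n/2) := by
  have hsub : (Matrix.of fun i j : Fin n => A ((i : ℕ) + j)).submatrix (shuf n) (shuf n)
      = fromBlocks (Matrix.of fun a b : Fin ((n+1)/2) => B ((a : ℕ) + b)) 0 0
          (Matrix.of fun a b : Fin (n/2) => B ((a : ℕ) + b + 1)) := by
    ext x y
    rcases x with a | a <;> rcases y with b | b <;>
      simp only [submatrix_apply, of_apply, fromBlocks_apply₁₁, fromBlocks_apply₁₂,
        fromBlocks_apply₂₁, fromBlocks_apply₂₂, shuf_inl, shuf_inr, Matrix.zero_apply]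
    · rw [show 2*(a:ℕ) + 2*(b:ℕ) = 2*((a:ℕ)+(b:ℕ)) from by ring, A_even]
    · rw [show 2*(a:ℕ) + (2*(b:ℕ)+1) = 2*((a:ℕ)+(b:ℕ))+1 from by ring, A_odd]
    · rw [show (2*(a:ℕ)+1) + 2*(b:ℕ) = 2*((a:ℕ)+(b:ℕ))+1 from by ring, A_odd]
    · rw [show (2*(a:ℕ)+1) + (2*(b:ℕ)+1) = 2*((a:ℕ)+(b:ℕ)+1) from by ring, A_even]
  rw [D, ← Matrix.det_submatrix_equiv_self (shuf n), hsub, det_fromBlocks_zero₂₁]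
  rfl

open Matrix in
lemma recQ (n : ℕ) : Q n = P ((n+1)/2) * Q (n/2) := by
  have hsub : (Matrix.of fun i j : Fin n => B ((i : ℕ) + j + 1)).submatrix (shuf n) (shuf n)
      = fromBlocks (Matrix.of fun a b : Fin ((n+1)/2) => B ((a : ℕ) + b)) 0 0
          (Matrix.of fun a b : Fin (n/2) => B ((a : ℕ) + b + 1)) := by
    ext x y
    rcases x with a | a <;> rcases y with b | b <;>
      simp only [submatrix_apply, of_apply, fromBlocks_apply₁₁, fromBlocks_apply₁₂,
        fromBlocks_apply₂₁, fromBlocks_apply₂₂, shuf_inl, shuf_inr, Matrix.zero_apply]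
    · rw [show 2*(a:ℕ) + 2*(b:ℕ) + 1 = 2*((a:ℕ)+(b:ℕ))+1 from by ring, B_odd]
    · rw [show 2*(a:ℕ) + (2*(b:ℕ)+1) + 1 = 2*((a:ℕ)+(b:ℕ)+1) from by ring, B_even]
      simp
    · rw [show (2*(a:ℕ)+1) + 2*(b:ℕ) + 1 = 2*((a:ℕ)+(b:ℕ)+1) from by ring, B_even]
      simp
    · rw [show (2*(a:ℕ)+1) + (2*(b:ℕ)+1) + 1 = 2*((a:ℕ)+(b:ℕ)+1)+1 from by ring, B_odd]
  rw [Q, ← Matrix.det_submatrix_equiv_self (shuf n), hsub, det_fromBlocks_zero₂₁]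
  rfl

lemma QeqD (n : ℕ) : Q n = D n := by rw [recQ, recD]

lemma recD' (n : ℕ) : D n = P ((n+1)/2) * D (n/2) := by rw [recD, QeqD]

def shufE (k : ℕ) : Fin k ⊕ Fin k ≃ Fin (2*k) :=
  (Equiv.sumCongr (finCongr (by omega : k = (2*k+1)/2)) (finCongr (by omega : k = (2*k)/2))).trans
    (shuf (2*k))

lemma shufE_inl (k : ℕ) (a : Fin k) : ((shufE k) (Sum.inl a) : ℕ) = 2 * a := by
  simp [shufE, shuf_inl]

lemma shufE_inr (k : ℕ) (b : Fin k) : ((shufE k) (Sum.inr b) : ℕ) = 2 * b + 1 := by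
  simp [shufE, shuf_inr]

open Matrix in
lemma recPeven (k : ℕ) : P (2*k) = (-1)^k * (P k * P k) := by
  have hsub : (Matrix.of fun i j : Fin (2*k) => B ((i : ℕ) + j)).submatrix (shufE k) (shufE k)
      = fromBlocks (Matrix.of fun a b : Fin k => B (2*((a : ℕ) + b)))
          (Matrix.of fun a b : Fin k => B ((a : ℕ) + b))
          (Matrix.of fun a b : Fin k => B ((a : ℕ) + b)) 0 := by
    ext x y
    rcases x with a | a <;> rcases y with b | b <;>
      simp only [submatrix_apply, of_apply, fromBlocks_apply₁₁, fromBlocks_apply₁₂,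
        fromBlocks_apply₂₁, fromBlocks_apply₂₂, shufE_inl, shufE_inr, Matrix.zero_apply]
    · rw [show 2*(a:ℕ) + 2*(b:ℕ) = 2*((a:ℕ)+(b:ℕ)) from by ring]
    · rw [show 2*(a:ℕ) + (2*(b:ℕ)+1) = 2*((a:ℕ)+(b:ℕ))+1 from by ring, B_odd]
    · rw [show (2*(a:ℕ)+1) + 2*(b:ℕ) = 2*((a:ℕ)+(b:ℕ))+1 from by ring, B_odd]
    · rw [show (2*(a:ℕ)+1) + (2*(b:ℕ)+1) = 2*((a:ℕ)+(b:ℕ)+1) from by ring, B_even]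
      simp
  rw [P, ← Matrix.det_submatrix_equiv_self (shufE k), hsub, det_swap_right]
  rfl

def tri (k : ℕ) : (Fin 1 ⊕ (Fin k ⊕ Fin k)) ≃ Fin (2*k+1) where
  toFun x := match x with
    | .inl _ => ⟨0, by omega⟩
    | .inr (.inl a) => ⟨2*a.1+2, by have := a.2; omega⟩
    | .inr (.inr b) => ⟨2*b.1+1, by have := b.2; omega⟩
  invFun i := if h0 : i.1 = 0 then .inl 0
    else if h : i.1 % 2 = 0 then .inr (.inl ⟨(i.1-2)/2, by have := i.2; omega⟩)
    else .inr (.inr ⟨i.1/2, by have := i.2; omega⟩)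
  left_inv x := by
    rcases x with z | (a | b)
    · dsimp only
      rw [dif_pos rfl]
      exact congrArg Sum.inl (Subsingleton.elim _ _)
    · dsimp only
      rw [dif_neg (by omega), dif_pos (by omega)]
      exact congrArg Sum.inr (congrArg Sum.inl (Fin.ext (by simp only [Fin.val_mk]; omega)))
    · dsimp only
      rw [dif_neg (by omega), dif_neg (by omega)]
      exact congrArg Sum.inr (congrArg Sum.inr (Fin.ext (by simp only [Fin.val_mk]; omega)))
  right_inv i := by
    dsimp only
    by_cases h0 : i.1 = 0
    · rw [dif_pos h0]
      exact Fin.ext (by simp only [Fin.val_mk]; omega)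
    · rw [dif_neg h0]
      by_cases h : i.1 % 2 = 0
      · rw [dif_pos h]
        exact Fin.ext (by simp only [Fin.val_mk]; omega)
      · rw [dif_neg h]
        exact Fin.ext (by simp only [Fin.val_mk]; omega)

lemma tri_one (k : ℕ) (z : Fin 1) : ((tri k) (Sum.inl z) : ℕ) = 0 := rfl
lemma tri_inl (k : ℕ) (a : Fin k) : ((tri k) (Sum.inr (Sum.inl a)) : ℕ) = 2*a+2 := rfl
lemma tri_inr (k : ℕ) (b : Fin k) : ((tri k) (Sum.inr (Sum.inr b)) : ℕ) = 2*b+1 := rfl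

open Matrix in
lemma recPodd (k : ℕ) : P (2*k+1) = (-1)^k * (Q k * Q k) := by
  set Br : Matrix (Fin 1) (Fin k ⊕ Fin k) ℤ :=
    Matrix.of fun _ y => Sum.elim (fun _ : Fin k => (0:ℤ)) (fun b : Fin k => B b) y with hBr
  set Bc : Matrix (Fin k ⊕ Fin k) (Fin 1) ℤ :=
    Matrix.of fun y _ => Sum.elim (fun _ : Fin k => (0:ℤ)) (fun b : Fin k => B b) y with hBc
  set Qm : Matrix (Fin k) (Fin k) ℤ := Matrix.of fun a b : Fin k => B ((a : ℕ) + b + 1) with hQm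
  have hsub : (Matrix.of fun i j : Fin (2*k+1) => B ((i : ℕ) + j)).submatrix (tri k) (tri k)
      = fromBlocks 1 Br Bc (fromBlocks 0 Qm Qm 0) := by
    ext x y
    rcases x with z | (a | a) <;> rcases y with z' | (b | b) <;>
      simp only [submatrix_apply, of_apply, fromBlocks_apply₁₁, fromBlocks_apply₁₂,
        fromBlocks_apply₂₁, fromBlocks_apply₂₂, tri_one, tri_inl, tri_inr, Matrix.zero_apply,
        hBr, hBc, hQm, Sum.elim_inl, Sum.elim_inr]
    · rw [show (0:ℕ) + 0 = 0 from rfl]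
      have hz : z = z' := Subsingleton.elim _ _
      rw [hz, Matrix.one_apply_eq]
      exact B_zero
    · rw [show (0:ℕ) + (2*(b:ℕ)+2) = 2*((b:ℕ)+1) from by ring, B_even]
      simp
    · rw [show (0:ℕ) + (2*(b:ℕ)+1) = 2*(b:ℕ)+1 from by ring, B_odd]
    · rw [show (2*(a:ℕ)+2) + 0 = 2*((a:ℕ)+1) from by ring, B_even]
      simp
    · rw [show (2*(a:ℕ)+2) + (2*(b:ℕ)+2) = 2*((a:ℕ)+(b:ℕ)+2) from by ring, B_even]
      simp
    · rw [show (2*(a:ℕ)+2) + (2*(b:ℕ)+1) = 2*((a:ℕ)+(b:ℕ)+1)+1 from by ring, B_odd]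
    · rw [show (2*(a:ℕ)+1) + 0 = 2*(a:ℕ)+1 from by ring, B_odd]
    · rw [show (2*(a:ℕ)+1) + (2*(b:ℕ)+2) = 2*((a:ℕ)+(b:ℕ)+1)+1 from by ring, B_odd]
    · rw [show (2*(a:ℕ)+1) + (2*(b:ℕ)+1) = 2*((a:ℕ)+(b:ℕ)+1) from by ring, B_even]
      simp
  have hschur : fromBlocks 0 Qm Qm (0 : Matrix (Fin k) (Fin k) ℤ) - Bc * Br
      = fromBlocks 0 Qm Qm (Matrix.of fun a b : Fin k => -(B (a:ℕ) * B (b:ℕ))) := by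
    ext x y
    rcases x with a | a <;> rcases y with b | b <;>
      simp only [Matrix.sub_apply, Matrix.mul_apply, Fin.sum_univ_one, fromBlocks_apply₁₁,
        fromBlocks_apply₁₂, fromBlocks_apply₂₁, fromBlocks_apply₂₂, hBr, hBc, of_apply,
        Sum.elim_inl, Sum.elim_inr, Matrix.zero_apply] <;> ring
  rw [P, ← Matrix.det_submatrix_equiv_self (tri k), hsub, det_fromBlocks_one₁₁, hschur,
    det_swap_left]
  rfl

lemma recPodd' (k : ℕ) : P (2*k+1) = (-1)^k * (D k * D k) := by
  rw [recPodd, QeqD]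

lemma P_zero : P 0 = 1 := Matrix.det_fin_zero

lemma D_zero : D 0 = 1 := Matrix.det_fin_zero

lemma PD (n : ℕ) : P n = (-1)^(n/2) ∧ D n * D n = 1 := by
  induction n using Nat.strong_induction_on with
  | _ n ih =>
    have hP : P n = (-1)^(n/2) := by
      rcases Nat.even_or_odd n with ⟨k, hk⟩ | ⟨k, hk⟩
      · rcases Nat.eq_zero_or_pos k with rfl | hkpos
        · rw [show n = 0 from by omega, P_zero]; norm_num
        · rw [show n = 2*k from by omega, recPeven, (ih k (by omega)).1,
            show (2*k)/2 = k from by omega, ← pow_add]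
          have : ((-1:ℤ))^(k/2 + k/2) = 1 := Even.neg_one_pow ⟨k/2, by omega⟩
          rw [this, mul_one]
      · rw [show n = 2*k+1 from by omega, recPodd', (ih k (by omega)).2,
          show (2*k+1)/2 = k from by omega, mul_one]
    refine ⟨hP, ?_⟩
    rcases Nat.eq_zero_or_pos n with rfl | hn
    · rw [D_zero]; norm_num
    rcases Nat.lt_or_ge n 2 with h2 | h2
    · have h1 : n = 1 := by omega
      subst h1
      have hP1 : P 1 = 1 := by simpa using hP
      rw [recD' 1]
      norm_num [hP1, D_zero]
    · have hu : (n+1)/2 < n := by omega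
      have hv : n/2 < n := by omega
      have h1 := (ih _ hu).1
      have h2' := (ih _ hv).2
      have ha : P ((n+1)/2) * P ((n+1)/2) = 1 := by
        rw [h1, ← pow_add]
        exact Even.neg_one_pow ⟨_, rfl⟩
      calc D n * D n = (P ((n+1)/2) * P ((n+1)/2)) * (D (n/2) * D (n/2)) := by
            rw [recD' n]; ring
        _ = 1 := by rw [ha, h2', mul_one]

lemma D_even (n : ℕ) : D (2*n) = (-1)^(n/2) * D n := by
  rw [recD' (2*n), show (2*n+1)/2 = n from by omega, show (2*n)/2 = n from by omega, (PD n).1]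

lemma D_odd (n : ℕ) : D (2*n+1) = (-1)^((n+1)/2) * D n := by
  rw [recD' (2*n+1), show (2*n+1+1)/2 = n+1 from by omega, show (2*n+1)/2 = n from by omega,
    (PD (n+1)).1]

theorem stmt9 :
    T 0 = 1 ∧ T 1 = -1 ∧
    (∀ n : ℕ, 1 ≤ n → T (2 * n) = T (2 * n - 1) * T (n - 1)) ∧
    (∀ n : ℕ, T (2 * n + 1) = -T (2 * n)) := by
  have hD1 : D 1 = 1 := by
    have := D_odd 0
    simpa [D_zero] using this
  have hD2 : D 2 = 1 := by
    have := D_even 1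
    simpa [hD1] using this
  have hD3 : D 3 = -1 := by
    have := D_odd 1
    simpa [hD1] using this
  refine ⟨by simp [T, D_zero, hD2], by simp [T, hD1, hD3], ?_, ?_⟩
  · rintro n hn
    obtain ⟨m, rfl⟩ : ∃ m, n = m + 1 := ⟨n - 1, by omega⟩
    rw [show 2*(m+1) - 1 = 2*m+1 from by omega, show m+1-1 = m from by omega]
    show D (2*(m+1)) * D (2*(m+1)+2) = (D (2*m+1) * D (2*m+1+2)) * (D m * D (m+2))
    rw [show 2*(m+1)+2 = 2*(m+2) from by omega, show 2*m+1+2 = 2*(m+1)+1 from by omega,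
      D_even (m+1), D_even (m+2), D_odd m, D_odd (m+1)]
    have hsq := (PD m).2
    linear_combination (-((-1:ℤ)^((m+1)/2) * (-1:ℤ)^((m+2)/2) * D (m+1) * D (m+2))) * hsq
  · intro n
    show D (2*n+1) * D (2*n+1+2) = -(D (2*n) * D (2*n+2))
    rw [show 2*n+1+2 = 2*(n+1)+1 from by omega, show 2*n+2 = 2*(n+1) from by omega,
      D_odd n, D_odd (n+1), D_even n, D_even (n+1),
      show (n+2)/2 = n/2 + 1 from by omega, pow_succ]
    ring
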